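/- The remainder of the tensor-product Bernstein cubature formula satisfies, for $F \in C^{2,2}([0,1]^2)$: $|R_{n_1,n_2}[F]| \le \frac{1}{12 n_1}\|F^{(2,0)}\|_\infty + \frac{1}{12 n_2}\|F^{(0,2)}\|_\infty + \frac{1}{144 n_1 n_2}\|F^{(2,2)}\|_\infty$. -/

import Mathlib

open Finset Set intervalIntegral

/-- real Bernstein basis -/
noncomputable def bp (n k : ℕ) (x : ℝ) : ℝ := (n.choose k : ℝ) * x ^ k * (1 - x) ^ (n - k)

lemma bp_eval (n k : ℕ) (x : ℝ) : (bernsteinPolynomial ℝ n k).eval x = bp n k x := by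
  simp [bernsteinPolynomial, bp]

lemma bp_nonneg {n k : ℕ} {x : ℝ} (hx : x ∈ Set.Icc (0:ℝ) 1) : 0 ≤ bp n k x := by
  obtain ⟨h0, h1⟩ := hx
  have h2 : (0:ℝ) ≤ 1 - x := by linarith
  have hc : (0:ℝ) ≤ (n.choose k : ℝ) := Nat.cast_nonneg _
  exact mul_nonneg (mul_nonneg hc (pow_nonneg h0 k)) (pow_nonneg h2 (n-k))

lemma bp_sum (n : ℕ) (x : ℝ) : ∑ k ∈ Finset.range (n+1), bp n k x = 1 := by
  have := congrArg (Polynomial.eval x) (bernsteinPolynomial.sum ℝ n)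
  simpa [Polynomial.eval_finset_sum, bp_eval] using this

lemma bp_sum_smul (n : ℕ) (x : ℝ) :
    ∑ k ∈ Finset.range (n+1), (k : ℝ) * bp n k x = n * x := by
  have := congrArg (Polynomial.eval x) (bernsteinPolynomial.sum_smul ℝ n)
  simpa [Polynomial.eval_finset_sum, bp_eval] using this

lemma bp_variance (n : ℕ) (x : ℝ) :
    ∑ k ∈ Finset.range (n+1), ((n:ℝ) * x - k) ^ 2 * bp n k x = n * x * (1 - x) := by
  have := congrArg (Polynomial.eval x) (bernsteinPolynomial.variance ℝ n)
  simpa [Polynomial.eval_finset_sum, bp_eval] using this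
lemma int_pow_mul : ∀ (m k : ℕ), ∫ x in (0:ℝ)..1, x ^ k * (1-x) ^ m =
    (k.factorial * m.factorial : ℝ) / (k + m + 1).factorial := by
  intro m
  induction m with
  | zero =>
    intro k
    simp only [pow_zero, mul_one, integral_pow]
    have e : k + 0 + 1 = k + 1 := by omega
    rw [e, Nat.factorial_succ]
    push_cast
    have : (0:ℝ) < (k:ℝ) + 1 := by positivity
    have hf : (0:ℝ) < (k.factorial : ℝ) := by exact_mod_cast k.factorial_pos
    field_simp
    simp
  | succ m IH =>
    intro k
    have key : ∫ x in (0:ℝ)..1, x ^ k * (1-x) ^ (m+1)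
        = (∫ x in (0:ℝ)..1, x ^ k * (1-x) ^ m) - ∫ x in (0:ℝ)..1, x ^ (k+1) * (1-x) ^ m := by
      rw [← intervalIntegral.integral_sub]
      · apply intervalIntegral.integral_congr
        intro x _
        ring
      · exact (Continuous.intervalIntegrable (by continuity) 0 1)
      · exact (Continuous.intervalIntegrable (by continuity) 0 1)
    rw [key, IH, IH]
    have e1 : k + 1 + m + 1 = (k + m + 1) + 1 := by omega
    have e2 : k + (m + 1) + 1 = (k + m + 1) + 1 := by omega
    rw [e1, e2, Nat.factorial_succ (k+m+1), Nat.factorial_succ m]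
    have h1 : (0:ℝ) < ((k+m+1).factorial : ℝ) := by exact_mod_cast (k+m+1).factorial_pos
    have h2 : (0:ℝ) < ((k+m+1 : ℕ) : ℝ) + 1 := by positivity
    rw [Nat.factorial_succ k]
    push_cast
    field_simp
    ring

lemma bp_integral {n k : ℕ} (hk : k ≤ n) :
    ∫ x in (0:ℝ)..1, (n.choose k : ℝ) * x ^ k * (1-x) ^ (n-k) = 1 / ((n:ℝ) + 1) := by
  have : ∫ x in (0:ℝ)..1, (n.choose k : ℝ) * x ^ k * (1-x) ^ (n-k)
      = (n.choose k : ℝ) * ∫ x in (0:ℝ)..1, x ^ k * (1-x) ^ (n-k) := by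
    rw [← intervalIntegral.integral_const_mul]
    apply intervalIntegral.integral_congr
    intro x _
    ring
  rw [this, int_pow_mul]
  have e : k + (n - k) + 1 = n + 1 := by omega
  rw [e, Nat.factorial_succ]
  have key : (n.choose k : ℕ) * (k.factorial * (n-k).factorial) = n.factorial := by
    rw [← Nat.choose_mul_factorial_mul_factorial hk]
    ring
  have hf : (0:ℝ) < (n.factorial : ℝ) := by exact_mod_cast n.factorial_pos
  have hn1 : (0:ℝ) < (n:ℝ) + 1 := by positivity
  have keyR : (n.choose k : ℝ) * ((k.factorial : ℝ) * ((n-k).factorial : ℝ)) = (n.factorial : ℝ) := by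
    exact_mod_cast congrArg (Nat.cast : ℕ → ℝ) key
  push_cast
  push_cast at keyR
  field_simp
  nlinarith [keyR]

/-- One-sided second-order bound via fencing. -/
lemma taylor_right {h h' : ℝ → ℝ} {M c d : ℝ} (hcd : c ≤ d)
    (hcont : ContinuousOn h (Set.Icc c d))
    (hh : ∀ t ∈ Set.Ico c d, HasDerivWithinAt h (h' t) (Set.Ici t) t)
    (h0 : h c = 0) (hb : ∀ t ∈ Set.Ico c d, |h' t| ≤ M * (t - c)) :
    |h d| ≤ M / 2 * (d - c) ^ 2 := by
  have hB : ∀ t : ℝ, HasDerivAt (fun t => M / 2 * (t - c) ^ 2) (M * (t - c)) t := by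
    intro t
    have h1 : HasDerivAt (fun t : ℝ => t - c) 1 t :=
      (hasDerivAt_id t).sub_const c
    have h2 : HasDerivAt (fun t : ℝ => (t - c) ^ 2) (2 * (t - c) ^ 1 * 1) t := h1.pow 2
    have := h2.const_mul (M / 2)
    exact this.congr_deriv (by ring)
  have ha : ‖h c‖ ≤ M / 2 * (c - c) ^ 2 := by simp [h0]
  have := image_norm_le_of_norm_deriv_right_le_deriv_boundary hcont hh ha hB
    (fun t ht => by simpa using hb t ht)
  simpa using this (Set.right_mem_Icc.2 hcd)

/-- Two-sided second order Taylor bound on `[0,1]`. -/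
lemma taylor_two {g g1 g2 : ℝ → ℝ} {M : ℝ}
    (hg1 : ∀ t ∈ Set.Icc (0:ℝ) 1, HasDerivWithinAt g (g1 t) (Set.Icc (0:ℝ) 1) t)
    (hg2 : ∀ t ∈ Set.Icc (0:ℝ) 1, HasDerivWithinAt g1 (g2 t) (Set.Icc (0:ℝ) 1) t)
    (hM : ∀ t ∈ Set.Icc (0:ℝ) 1, |g2 t| ≤ M)
    {x a : ℝ} (hx : x ∈ Set.Icc (0:ℝ) 1) (ha : a ∈ Set.Icc (0:ℝ) 1) :
    |g a - g x - g1 x * (a - x)| ≤ M / 2 * (a - x) ^ 2 := by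
  -- Lipschitz bound on g1
  have hlip : ∀ t ∈ Set.Icc (0:ℝ) 1, |g1 t - g1 x| ≤ M * |t - x| := by
    intro t ht
    have := (convex_Icc (0:ℝ) 1).norm_image_sub_le_of_norm_hasDerivWithin_le
      hg2 (fun u hu => by simpa using hM u hu) hx ht
    simpa [Real.norm_eq_abs] using this
  set h : ℝ → ℝ := fun t => g t - g x - g1 x * (t - x) with hh
  have hcont : ContinuousOn h (Set.Icc (0:ℝ) 1) := by
    have hgc : ContinuousOn g (Set.Icc (0:ℝ) 1) :=
      fun t ht => (hg1 t ht).continuousWithinAt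
    exact (hgc.sub continuousOn_const).sub (continuousOn_const.mul
      (continuousOn_id.sub continuousOn_const))
  have hderiv : ∀ t ∈ Set.Icc (0:ℝ) 1, HasDerivWithinAt h (g1 t - g1 x) (Set.Icc (0:ℝ) 1) t := by
    intro t ht
    have h1 := (hg1 t ht).sub_const (g x)
    have h2 : HasDerivWithinAt (fun t : ℝ => g1 x * (t - x)) (g1 x) (Set.Icc (0:ℝ) 1) t := by
      simpa using (((hasDerivWithinAt_id t (Set.Icc (0:ℝ) 1)).sub_const x).const_mul (g1 x))
    exact h1.sub h2
  rcases le_or_gt x a with hxa | hax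
  · -- right case: apply taylor_right on [x, a]
    have key : |h a| ≤ M / 2 * (a - x) ^ 2 := by
      apply taylor_right hxa (hcont.mono (Set.Icc_subset_Icc hx.1 ha.2))
      · intro t ht
        have ht' : t ∈ Set.Icc (0:ℝ) 1 := ⟨le_trans hx.1 ht.1, le_of_lt (lt_of_lt_of_le ht.2 ha.2)⟩
        refine (hderiv t ht').mono_of_mem_nhdsWithin ?_
        refine Filter.mem_of_superset (Icc_mem_nhdsGE_of_mem ⟨ht'.1, lt_of_lt_of_le ht.2 ha.2⟩) ?_
        exact subset_rfl
      · simp [hh]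
      · intro t ht
        have ht' : t ∈ Set.Icc (0:ℝ) 1 := ⟨le_trans hx.1 ht.1, le_of_lt (lt_of_lt_of_le ht.2 ha.2)⟩
        have := hlip t ht'
        rwa [abs_of_nonneg (by linarith [ht.1] : (0:ℝ) ≤ t - x)] at this
    simpa [hh] using key
  · -- left case: reflect
    set k : ℝ → ℝ := fun s => h (x + a - s) with hk
    have hmap : ∀ s ∈ Set.Icc a x, x + a - s ∈ Set.Icc a x := by
      intro s hs
      simp only [Set.mem_Icc] at hs ⊢
      exact ⟨by linarith [hs.2], by linarith [hs.1]⟩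
    have hsub : Set.Icc a x ⊆ Set.Icc (0:ℝ) 1 := Set.Icc_subset_Icc ha.1 hx.2
    have hkcont : ContinuousOn k (Set.Icc a x) := by
      apply (hcont.mono hsub).comp (Continuous.continuousOn (by continuity))
      exact hmap
    have key : |k x| ≤ M / 2 * (x - a) ^ 2 := by
      apply taylor_right hax.le hkcont
      · intro s hs
        have hs' : s ∈ Set.Icc a x := ⟨hs.1, hs.2.le⟩
        have hu : x + a - s ∈ Set.Icc a x := hmap s hs'
        have hd := hderiv (x + a - s) (hsub hu)
        have hphi : HasDerivWithinAt (fun s : ℝ => x + a - s) (-1) (Set.Icc a x) s := by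
          exact ((hasDerivWithinAt_const s (Set.Icc a x) (x + a)).sub
            (hasDerivWithinAt_id s (Set.Icc a x))).congr_deriv (by norm_num)
        have hcomp : HasDerivWithinAt k ((g1 (x + a - s) - g1 x) * (-1)) (Set.Icc a x) s := by
          exact HasDerivWithinAt.comp s (hd.mono hsub) hphi
            (fun u hu' => hmap u hu')
        refine (hcomp.mono_of_mem_nhdsWithin ?_)
        refine Filter.mem_of_superset (Icc_mem_nhdsGE_of_mem ⟨hs.1, hs.2⟩) ?_
        exact Set.Icc_subset_Icc le_rfl le_rfl
      · simp [hk, hh]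
      · intro s hs
        have hs' : s ∈ Set.Icc a x := ⟨hs.1, hs.2.le⟩
        have hu : x + a - s ∈ Set.Icc (0:ℝ) 1 := hsub (hmap s hs')
        have := hlip (x + a - s) hu
        have habs : |x + a - s - x| = s - a := by
          rw [abs_of_nonpos (by linarith [hs.1])]
          ring
        calc |(g1 (x + a - s) - g1 x) * (-1)| = |g1 (x + a - s) - g1 x| := by
              rw [abs_mul]; simp
          _ ≤ M * (s - a) := by rwa [habs] at this
    have hkx : k x = h a := by simp [hk]
    have : |h a| ≤ M / 2 * (x - a) ^ 2 := by rwa [hkx] at key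
    calc |g a - g x - g1 x * (a - x)| = |h a| := by simp [hh]
      _ ≤ M / 2 * (x - a) ^ 2 := this
      _ = M / 2 * (a - x) ^ 2 := by ring

lemma bern_approx {n : ℕ} (hn : 0 < n) {g g1 g2 : ℝ → ℝ} {M : ℝ}
    (hg1 : ∀ t ∈ Set.Icc (0:ℝ) 1, HasDerivWithinAt g (g1 t) (Set.Icc (0:ℝ) 1) t)
    (hg2 : ∀ t ∈ Set.Icc (0:ℝ) 1, HasDerivWithinAt g1 (g2 t) (Set.Icc (0:ℝ) 1) t)
    (hM : ∀ t ∈ Set.Icc (0:ℝ) 1, |g2 t| ≤ M)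
    {x : ℝ} (hx : x ∈ Set.Icc (0:ℝ) 1) :
    |∑ k ∈ Finset.range (n+1), bp n k x * g ((k : ℝ)/n) - g x| ≤ M * (x * (1-x)) / (2*n) := by
  have hnR : (0:ℝ) < n := by exact_mod_cast hn
  have hmem : ∀ k ∈ Finset.range (n+1), ((k:ℝ)/n) ∈ Set.Icc (0:ℝ) 1 := by
    intro k hk
    have hk' : (k:ℝ) ≤ n := by
      exact_mod_cast Nat.lt_succ_iff.mp (Finset.mem_range.mp hk)
    exact ⟨div_nonneg (Nat.cast_nonneg k) hnR.le, by rw [div_le_one hnR]; exact hk'⟩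
  -- rewrite the difference
  have key : ∑ k ∈ Finset.range (n+1), bp n k x * g ((k : ℝ)/n) - g x
      = ∑ k ∈ Finset.range (n+1), bp n k x * (g ((k:ℝ)/n) - g x - g1 x * ((k:ℝ)/n - x)) := by
    have e1 : ∑ k ∈ Finset.range (n+1), bp n k x * g x = g x := by
      rw [← Finset.sum_mul, bp_sum, one_mul]
    have e2 : ∑ k ∈ Finset.range (n+1), bp n k x * (g1 x * ((k:ℝ)/n - x)) = 0 := by
      have : ∑ k ∈ Finset.range (n+1), bp n k x * ((k:ℝ)/n - x) = 0 := by
        have h1 := bp_sum_smul n x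
        have h2 := bp_sum n x
        have expand : ∑ k ∈ Finset.range (n+1), bp n k x * ((k:ℝ)/n - x)
            = (1/(n:ℝ)) * (∑ k ∈ Finset.range (n+1), (k:ℝ) * bp n k x)
              - x * ∑ k ∈ Finset.range (n+1), bp n k x := by
          rw [Finset.mul_sum, Finset.mul_sum, ← Finset.sum_sub_distrib]
          apply Finset.sum_congr rfl
          intro k _
          field_simp
        rw [expand, h1, h2]
        field_simp
        ring
      calc ∑ k ∈ Finset.range (n+1), bp n k x * (g1 x * ((k:ℝ)/n - x))
          = g1 x * ∑ k ∈ Finset.range (n+1), bp n k x * ((k:ℝ)/n - x) := by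
            rw [Finset.mul_sum]; apply Finset.sum_congr rfl; intro k _; ring
        _ = 0 := by rw [this, mul_zero]
    have split : ∑ k ∈ Finset.range (n+1), bp n k x * (g ((k:ℝ)/n) - g x - g1 x * ((k:ℝ)/n - x))
        = (∑ k ∈ Finset.range (n+1), bp n k x * g ((k:ℝ)/n))
          - (∑ k ∈ Finset.range (n+1), bp n k x * g x)
          - ∑ k ∈ Finset.range (n+1), bp n k x * (g1 x * ((k:ℝ)/n - x)) := by
      rw [← Finset.sum_sub_distrib, ← Finset.sum_sub_distrib]
      apply Finset.sum_congr rfl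
      intro k _
      ring
    rw [split, e1, e2]
    ring
  rw [key]
  -- bound each term
  have hbound : ∀ k ∈ Finset.range (n+1),
      |bp n k x * (g ((k:ℝ)/n) - g x - g1 x * ((k:ℝ)/n - x))|
        ≤ bp n k x * (M / 2 * ((k:ℝ)/n - x) ^ 2) := by
    intro k hk
    rw [abs_mul, abs_of_nonneg (bp_nonneg hx)]
    apply mul_le_mul_of_nonneg_left _ (bp_nonneg hx)
    exact taylor_two hg1 hg2 hM hx (hmem k hk)
  calc |∑ k ∈ Finset.range (n+1), bp n k x * (g ((k:ℝ)/n) - g x - g1 x * ((k:ℝ)/n - x))|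
      ≤ ∑ k ∈ Finset.range (n+1), |bp n k x * (g ((k:ℝ)/n) - g x - g1 x * ((k:ℝ)/n - x))| :=
        Finset.abs_sum_le_sum_abs _ _
    _ ≤ ∑ k ∈ Finset.range (n+1), bp n k x * (M / 2 * ((k:ℝ)/n - x) ^ 2) :=
        Finset.sum_le_sum hbound
    _ = (M / (2 * n^2)) * ∑ k ∈ Finset.range (n+1), ((n:ℝ) * x - k) ^ 2 * bp n k x := by
        rw [Finset.mul_sum]
        apply Finset.sum_congr rfl
        intro k _
        field_simp
        ring
    _ = M * (x * (1-x)) / (2*n) := by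
        rw [bp_variance]
        field_simp

lemma div_mem_Icc {n : ℕ} (hn : 0 < n) {k : ℕ} (hk : k ∈ Finset.range (n+1)) :
    ((k:ℝ)/n) ∈ Set.Icc (0:ℝ) 1 := by
  have hnR : (0:ℝ) < n := by exact_mod_cast hn
  have hk' : (k:ℝ) ≤ n := by exact_mod_cast Nat.lt_succ_iff.mp (Finset.mem_range.mp hk)
  exact ⟨div_nonneg (Nat.cast_nonneg k) hnR.le, by rw [div_le_one hnR]; exact hk'⟩

lemma bern2_pointwise {n₁ n₂ : ℕ} (hn₁ : 0 < n₁) (hn₂ : 0 < n₂)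
    {F Fx Fxx Fy Fyy : ℝ → ℝ → ℝ} {Mxx Myy : ℝ}
    (hFx : ∀ y ∈ Set.Icc (0:ℝ) 1, ∀ x ∈ Set.Icc (0:ℝ) 1,
      HasDerivWithinAt (fun t => F t y) (Fx x y) (Set.Icc (0:ℝ) 1) x)
    (hFxx : ∀ y ∈ Set.Icc (0:ℝ) 1, ∀ x ∈ Set.Icc (0:ℝ) 1,
      HasDerivWithinAt (fun t => Fx t y) (Fxx x y) (Set.Icc (0:ℝ) 1) x)
    (hFy : ∀ x ∈ Set.Icc (0:ℝ) 1, ∀ y ∈ Set.Icc (0:ℝ) 1,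
      HasDerivWithinAt (fun t => F x t) (Fy x y) (Set.Icc (0:ℝ) 1) y)
    (hFyy : ∀ x ∈ Set.Icc (0:ℝ) 1, ∀ y ∈ Set.Icc (0:ℝ) 1,
      HasDerivWithinAt (fun t => Fy x t) (Fyy x y) (Set.Icc (0:ℝ) 1) y)
    (hMxx : ∀ a ∈ Set.Icc (0:ℝ) 1, ∀ b ∈ Set.Icc (0:ℝ) 1, |Fxx a b| ≤ Mxx)
    (hMyy : ∀ a ∈ Set.Icc (0:ℝ) 1, ∀ b ∈ Set.Icc (0:ℝ) 1, |Fyy a b| ≤ Myy)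
    {x y : ℝ} (hx : x ∈ Set.Icc (0:ℝ) 1) (hy : y ∈ Set.Icc (0:ℝ) 1) :
    |F x y - ∑ i ∈ Finset.range (n₁+1), ∑ j ∈ Finset.range (n₂+1),
        bp n₁ i x * bp n₂ j y * F ((i:ℝ)/n₁) ((j:ℝ)/n₂)|
      ≤ Mxx * (x * (1-x)) / (2*n₁) + Myy * (y * (1-y)) / (2*n₂) := by
  set S1 := ∑ i ∈ Finset.range (n₁+1), bp n₁ i x * F ((i:ℝ)/n₁) y with hS1
  have t1 : |S1 - F x y| ≤ Mxx * (x * (1-x)) / (2*n₁) :=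
    bern_approx hn₁ (hFx y hy) (hFxx y hy) (fun t ht => hMxx t ht y hy) hx
  have t2 : |S1 - ∑ i ∈ Finset.range (n₁+1), ∑ j ∈ Finset.range (n₂+1),
      bp n₁ i x * bp n₂ j y * F ((i:ℝ)/n₁) ((j:ℝ)/n₂)| ≤ Myy * (y * (1-y)) / (2*n₂) := by
    have inner : ∀ i ∈ Finset.range (n₁+1),
        |∑ j ∈ Finset.range (n₂+1), bp n₂ j y * F ((i:ℝ)/n₁) ((j:ℝ)/n₂) - F ((i:ℝ)/n₁) y|
          ≤ Myy * (y * (1-y)) / (2*n₂) := by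
      intro i hi
      have him := div_mem_Icc hn₁ hi
      exact bern_approx hn₂ (hFy _ him) (hFyy _ him) (fun t ht => hMyy _ him t ht) hy
    have rearrange : S1 - ∑ i ∈ Finset.range (n₁+1), ∑ j ∈ Finset.range (n₂+1),
        bp n₁ i x * bp n₂ j y * F ((i:ℝ)/n₁) ((j:ℝ)/n₂)
        = ∑ i ∈ Finset.range (n₁+1), bp n₁ i x *
            (F ((i:ℝ)/n₁) y - ∑ j ∈ Finset.range (n₂+1), bp n₂ j y * F ((i:ℝ)/n₁) ((j:ℝ)/n₂)) := by
      rw [hS1, ← Finset.sum_sub_distrib]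
      apply Finset.sum_congr rfl
      intro i _
      rw [mul_sub, Finset.mul_sum]
      congr 1
      apply Finset.sum_congr rfl
      intro j _
      ring
    rw [rearrange]
    calc |∑ i ∈ Finset.range (n₁+1), bp n₁ i x *
            (F ((i:ℝ)/n₁) y - ∑ j ∈ Finset.range (n₂+1), bp n₂ j y * F ((i:ℝ)/n₁) ((j:ℝ)/n₂))|
        ≤ ∑ i ∈ Finset.range (n₁+1), |bp n₁ i x *
            (F ((i:ℝ)/n₁) y - ∑ j ∈ Finset.range (n₂+1), bp n₂ j y * F ((i:ℝ)/n₁) ((j:ℝ)/n₂))| :=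
          Finset.abs_sum_le_sum_abs _ _
      _ ≤ ∑ i ∈ Finset.range (n₁+1), bp n₁ i x * (Myy * (y * (1-y)) / (2*n₂)) := by
          apply Finset.sum_le_sum
          intro i hi
          rw [abs_mul, abs_of_nonneg (bp_nonneg hx)]
          apply mul_le_mul_of_nonneg_left _ (bp_nonneg hx)
          rw [abs_sub_comm]
          exact inner i hi
      _ = Myy * (y * (1-y)) / (2*n₂) := by
          rw [← Finset.sum_mul, bp_sum, one_mul]
  calc |F x y - ∑ i ∈ Finset.range (n₁+1), ∑ j ∈ Finset.range (n₂+1),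
        bp n₁ i x * bp n₂ j y * F ((i:ℝ)/n₁) ((j:ℝ)/n₂)|
      ≤ |F x y - S1| + |S1 - ∑ i ∈ Finset.range (n₁+1), ∑ j ∈ Finset.range (n₂+1),
          bp n₁ i x * bp n₂ j y * F ((i:ℝ)/n₁) ((j:ℝ)/n₂)| := abs_sub_le _ _ _
    _ ≤ Mxx * (x * (1-x)) / (2*n₁) + Myy * (y * (1-y)) / (2*n₂) := by
        rw [abs_sub_comm] at t1
        exact add_le_add t1 t2

lemma bp_cont (n k : ℕ) : Continuous (bp n k) := by
  unfold bp
  continuity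

lemma bp_int {n k : ℕ} (hk : k ≤ n) : ∫ x in (0:ℝ)..1, bp n k x = 1 / ((n:ℝ) + 1) := by
  simpa [bp] using bp_integral hk

lemma integral_x_one_sub_x : ∫ x in (0:ℝ)..1, x * (1-x) = 1/6 := by
  have := int_pow_mul 1 1
  norm_num [Nat.factorial] at this
  simpa [pow_one] using this

/-- three-term remainder bound for the tensor-product Bernstein cubature
formula, for `F ∈ C^{2,2}([0,1]²)`. -/
theorem stmt5 (n₁ n₂ : ℕ) (hn₁ : 0 < n₁) (hn₂ : 0 < n₂)
    (F Fx Fxx Fy Fyy Fxxy Fxxyy : ℝ → ℝ → ℝ)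
    (hFc : ContinuousOn (fun p : ℝ × ℝ => F p.1 p.2)
      (Set.Icc (0:ℝ) 1 ×ˢ Set.Icc (0:ℝ) 1))
    (hFx : ∀ y ∈ Set.Icc (0:ℝ) 1, ∀ x ∈ Set.Icc (0:ℝ) 1,
      HasDerivWithinAt (fun t => F t y) (Fx x y) (Set.Icc (0:ℝ) 1) x)
    (hFxx : ∀ y ∈ Set.Icc (0:ℝ) 1, ∀ x ∈ Set.Icc (0:ℝ) 1,
      HasDerivWithinAt (fun t => Fx t y) (Fxx x y) (Set.Icc (0:ℝ) 1) x)
    (hFy : ∀ x ∈ Set.Icc (0:ℝ) 1, ∀ y ∈ Set.Icc (0:ℝ) 1,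
      HasDerivWithinAt (fun t => F x t) (Fy x y) (Set.Icc (0:ℝ) 1) y)
    (hFyy : ∀ x ∈ Set.Icc (0:ℝ) 1, ∀ y ∈ Set.Icc (0:ℝ) 1,
      HasDerivWithinAt (fun t => Fy x t) (Fyy x y) (Set.Icc (0:ℝ) 1) y)
    (hFxxy : ∀ x ∈ Set.Icc (0:ℝ) 1, ∀ y ∈ Set.Icc (0:ℝ) 1,
      HasDerivWithinAt (fun t => Fxx x t) (Fxxy x y) (Set.Icc (0:ℝ) 1) y)
    (hFxxyy : ∀ x ∈ Set.Icc (0:ℝ) 1, ∀ y ∈ Set.Icc (0:ℝ) 1,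
      HasDerivWithinAt (fun t => Fxxy x t) (Fxxyy x y) (Set.Icc (0:ℝ) 1) y)
    (hFxxc : ContinuousOn (fun p : ℝ × ℝ => Fxx p.1 p.2)
      (Set.Icc (0:ℝ) 1 ×ˢ Set.Icc (0:ℝ) 1))
    (hFyyc : ContinuousOn (fun p : ℝ × ℝ => Fyy p.1 p.2)
      (Set.Icc (0:ℝ) 1 ×ˢ Set.Icc (0:ℝ) 1))
    (hFxxyyc : ContinuousOn (fun p : ℝ × ℝ => Fxxyy p.1 p.2)
      (Set.Icc (0:ℝ) 1 ×ˢ Set.Icc (0:ℝ) 1)) :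
    |(∫ x in (0:ℝ)..1, ∫ y in (0:ℝ)..1, F x y) -
        (1 / (((n₁ : ℝ) + 1) * ((n₂ : ℝ) + 1))) *
          ∑ i ∈ Finset.range (n₁ + 1), ∑ j ∈ Finset.range (n₂ + 1),
            F ((i : ℝ) / n₁) ((j : ℝ) / n₂)| ≤
      (1 / (12 * n₁)) * (⨆ p : (Set.Icc (0:ℝ) 1 ×ˢ Set.Icc (0:ℝ) 1 : Set (ℝ × ℝ)),
          |Fxx (p : ℝ × ℝ).1 (p : ℝ × ℝ).2|) +
        (1 / (12 * n₂)) * (⨆ p : (Set.Icc (0:ℝ) 1 ×ˢ Set.Icc (0:ℝ) 1 : Set (ℝ × ℝ)),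
          |Fyy (p : ℝ × ℝ).1 (p : ℝ × ℝ).2|) +
        (1 / (144 * n₁ * n₂)) * (⨆ p : (Set.Icc (0:ℝ) 1 ×ˢ Set.Icc (0:ℝ) 1 : Set (ℝ × ℝ)),
          |Fxxyy (p : ℝ × ℝ).1 (p : ℝ × ℝ).2|) := by
  have h01 : (0:ℝ) ≤ 1 := zero_le_one
  have huIcc : Set.uIcc (0:ℝ) 1 = Set.Icc (0:ℝ) 1 := Set.uIcc_of_le h01
  have huIoc : Set.uIoc (0:ℝ) 1 = Set.Ioc (0:ℝ) 1 := Set.uIoc_of_le h01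
  have hn₁R : (0:ℝ) < n₁ := by exact_mod_cast hn₁
  have hn₂R : (0:ℝ) < n₂ := by exact_mod_cast hn₂
  have hsq : IsCompact (Set.Icc (0:ℝ) 1 ×ˢ Set.Icc (0:ℝ) 1) := isCompact_Icc.prod isCompact_Icc
  set Mxx := ⨆ p : (Set.Icc (0:ℝ) 1 ×ˢ Set.Icc (0:ℝ) 1 : Set (ℝ × ℝ)),
      |Fxx (p : ℝ × ℝ).1 (p : ℝ × ℝ).2| with hMxxdef
  set Myy := ⨆ p : (Set.Icc (0:ℝ) 1 ×ˢ Set.Icc (0:ℝ) 1 : Set (ℝ × ℝ)),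
      |Fyy (p : ℝ × ℝ).1 (p : ℝ × ℝ).2| with hMyydef
  set Mzz := ⨆ p : (Set.Icc (0:ℝ) 1 ×ˢ Set.Icc (0:ℝ) 1 : Set (ℝ × ℝ)),
      |Fxxyy (p : ℝ × ℝ).1 (p : ℝ × ℝ).2| with hMzzdef
  have hMxx : ∀ a ∈ Set.Icc (0:ℝ) 1, ∀ b ∈ Set.Icc (0:ℝ) 1, |Fxx a b| ≤ Mxx := by
    intro a ha b hb
    have hbdd : BddAbove (Set.range fun p : (Set.Icc (0:ℝ) 1 ×ˢ Set.Icc (0:ℝ) 1 : Set (ℝ × ℝ)) =>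
        |Fxx (p : ℝ × ℝ).1 (p : ℝ × ℝ).2|) := by
      have him : BddAbove ((fun q : ℝ × ℝ => |Fxx q.1 q.2|) ''
          (Set.Icc (0:ℝ) 1 ×ˢ Set.Icc (0:ℝ) 1)) :=
        (hsq.image_of_continuousOn hFxxc.abs).bddAbove
      have heq : (Set.range fun p : (Set.Icc (0:ℝ) 1 ×ˢ Set.Icc (0:ℝ) 1 : Set (ℝ × ℝ)) =>
          |Fxx (p : ℝ × ℝ).1 (p : ℝ × ℝ).2|) = (fun q : ℝ × ℝ => |Fxx q.1 q.2|) ''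
          (Set.Icc (0:ℝ) 1 ×ˢ Set.Icc (0:ℝ) 1) := by
        ext v
        constructor
        · rintro ⟨⟨q, hq⟩, rfl⟩; exact ⟨q, hq, rfl⟩
        · rintro ⟨q, hq, rfl⟩; exact ⟨⟨q, hq⟩, rfl⟩
      rw [heq]
      exact him
    exact le_ciSup hbdd ⟨(a, b), Set.mk_mem_prod ha hb⟩
  have hMyy : ∀ a ∈ Set.Icc (0:ℝ) 1, ∀ b ∈ Set.Icc (0:ℝ) 1, |Fyy a b| ≤ Myy := by
    intro a ha b hb
    have hbdd : BddAbove (Set.range fun p : (Set.Icc (0:ℝ) 1 ×ˢ Set.Icc (0:ℝ) 1 : Set (ℝ × ℝ)) =>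
        |Fyy (p : ℝ × ℝ).1 (p : ℝ × ℝ).2|) := by
      have him : BddAbove ((fun q : ℝ × ℝ => |Fyy q.1 q.2|) ''
          (Set.Icc (0:ℝ) 1 ×ˢ Set.Icc (0:ℝ) 1)) :=
        (hsq.image_of_continuousOn hFyyc.abs).bddAbove
      have heq : (Set.range fun p : (Set.Icc (0:ℝ) 1 ×ˢ Set.Icc (0:ℝ) 1 : Set (ℝ × ℝ)) =>
          |Fyy (p : ℝ × ℝ).1 (p : ℝ × ℝ).2|) = (fun q : ℝ × ℝ => |Fyy q.1 q.2|) ''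
          (Set.Icc (0:ℝ) 1 ×ˢ Set.Icc (0:ℝ) 1) := by
        ext v
        constructor
        · rintro ⟨⟨q, hq⟩, rfl⟩; exact ⟨q, hq, rfl⟩
        · rintro ⟨q, hq, rfl⟩; exact ⟨⟨q, hq⟩, rfl⟩
      rw [heq]
      exact him
    exact le_ciSup hbdd ⟨(a, b), Set.mk_mem_prod ha hb⟩
  have hMxx0 : 0 ≤ Mxx := le_trans (abs_nonneg _) (hMxx 0 (by norm_num) 0 (by norm_num))
  have hMyy0 : 0 ≤ Myy := le_trans (abs_nonneg _) (hMyy 0 (by norm_num) 0 (by norm_num))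
  have hMzz0 : 0 ≤ Mzz := Real.iSup_nonneg (fun p => abs_nonneg _)
  set BB : ℝ → ℝ → ℝ := fun x y => ∑ i ∈ Finset.range (n₁+1), ∑ j ∈ Finset.range (n₂+1),
      bp n₁ i x * bp n₂ j y * F ((i:ℝ)/n₁) ((j:ℝ)/n₂) with hBBdef
  have hBBconty : ∀ x : ℝ, Continuous (fun y => BB x y) := by
    intro x
    apply continuous_finset_sum
    intro i _
    apply continuous_finset_sum
    intro j _
    exact (continuous_const.mul (bp_cont n₂ j)).mul continuous_const
  have hBBcontx : Continuous (fun x => ∑ i ∈ Finset.range (n₁+1), ∑ j ∈ Finset.range (n₂+1),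
      bp n₁ i x * F ((i:ℝ)/n₁) ((j:ℝ)/n₂) * (1/((n₂:ℝ)+1))) := by
    apply continuous_finset_sum
    intro i _
    apply continuous_finset_sum
    intro j _
    exact ((bp_cont n₁ i).mul continuous_const).mul continuous_const
  -- inner integral of BB
  have hBBint : ∀ x : ℝ, ∫ y in (0:ℝ)..1, BB x y
      = ∑ i ∈ Finset.range (n₁+1), ∑ j ∈ Finset.range (n₂+1),
          bp n₁ i x * F ((i:ℝ)/n₁) ((j:ℝ)/n₂) * (1/((n₂:ℝ)+1)) := by
    intro x
    rw [hBBdef]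
    rw [intervalIntegral.integral_finset_sum]
    swap
    · intro i _
      apply Continuous.intervalIntegrable
      apply continuous_finset_sum
      intro j _
      exact (continuous_const.mul (bp_cont n₂ j)).mul continuous_const
    apply Finset.sum_congr rfl
    intro i _
    rw [intervalIntegral.integral_finset_sum]
    swap
    · intro j _
      exact ((continuous_const.mul (bp_cont n₂ j)).mul continuous_const).intervalIntegrable 0 1
    apply Finset.sum_congr rfl
    intro j hj
    have : (fun y => bp n₁ i x * bp n₂ j y * F ((i:ℝ)/n₁) ((j:ℝ)/n₂))
        = fun y => (bp n₁ i x * F ((i:ℝ)/n₁) ((j:ℝ)/n₂)) * bp n₂ j y := by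
      funext y; ring
    rw [this, intervalIntegral.integral_const_mul,
      bp_int (Nat.lt_succ_iff.mp (Finset.mem_range.mp hj))]
  -- full integral of BB
  have houter : (∫ x in (0:ℝ)..1, ∫ y in (0:ℝ)..1, BB x y)
      = (1 / (((n₁:ℝ)+1) * ((n₂:ℝ)+1))) * ∑ i ∈ Finset.range (n₁+1), ∑ j ∈ Finset.range (n₂+1),
          F ((i:ℝ)/n₁) ((j:ℝ)/n₂) := by
    have e : (fun x => ∫ y in (0:ℝ)..1, BB x y)
        = fun x => ∑ i ∈ Finset.range (n₁+1), ∑ j ∈ Finset.range (n₂+1),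
            bp n₁ i x * F ((i:ℝ)/n₁) ((j:ℝ)/n₂) * (1/((n₂:ℝ)+1)) := funext hBBint
    rw [e]
    rw [intervalIntegral.integral_finset_sum]
    swap
    · intro i _
      apply Continuous.intervalIntegrable
      apply continuous_finset_sum
      intro j _
      exact ((bp_cont n₁ i).mul continuous_const).mul continuous_const
    rw [Finset.mul_sum]
    apply Finset.sum_congr rfl
    intro i hi
    rw [intervalIntegral.integral_finset_sum]
    swap
    · intro j _
      exact (((bp_cont n₁ i).mul continuous_const).mul continuous_const).intervalIntegrable 0 1
    rw [Finset.mul_sum]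
    apply Finset.sum_congr rfl
    intro j _
    have : (fun x => bp n₁ i x * F ((i:ℝ)/n₁) ((j:ℝ)/n₂) * (1/((n₂:ℝ)+1)))
        = fun x => (F ((i:ℝ)/n₁) ((j:ℝ)/n₂) * (1/((n₂:ℝ)+1))) * bp n₁ i x := by
      funext x; ring
    rw [this, intervalIntegral.integral_const_mul,
      bp_int (Nat.lt_succ_iff.mp (Finset.mem_range.mp hi))]
    rw [one_div, one_div, one_div, mul_inv]
    ring
  -- slice continuity
  have hFslice : ∀ x ∈ Set.Icc (0:ℝ) 1, ContinuousOn (fun y => F x y) (Set.Icc (0:ℝ) 1) := by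
    intro x hx
    have : ContinuousOn ((fun p : ℝ × ℝ => F p.1 p.2) ∘ fun y : ℝ => (x, y)) (Set.Icc (0:ℝ) 1) :=
      hFc.comp (Continuous.continuousOn (continuous_const.prodMk continuous_id))
        (fun y hy => Set.mk_mem_prod hx hy)
    exact this
  have hFslice' : ∀ y ∈ Set.Icc (0:ℝ) 1, ContinuousOn (fun x => F x y) (Set.Icc (0:ℝ) 1) := by
    intro y hy
    have : ContinuousOn ((fun p : ℝ × ℝ => F p.1 p.2) ∘ fun x : ℝ => (x, y)) (Set.Icc (0:ℝ) 1) :=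
      hFc.comp (Continuous.continuousOn (continuous_id.prodMk continuous_const))
        (fun x hx => Set.mk_mem_prod hx hy)
    exact this
  have hFyint : ∀ x ∈ Set.Icc (0:ℝ) 1, IntervalIntegrable (fun y => F x y) MeasureTheory.volume 0 1 := by
    intro x hx
    apply ContinuousOn.intervalIntegrable
    rw [huIcc]
    exact hFslice x hx
  obtain ⟨C, hC⟩ := hsq.exists_bound_of_continuousOn hFc
  have hHcont : ContinuousOn (fun x => ∫ y in (0:ℝ)..1, F x y) (Set.Icc (0:ℝ) 1) := by
    intro x₀ hx₀
    apply intervalIntegral.continuousWithinAt_of_dominated_interval (bound := fun _ => C)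
    · filter_upwards [self_mem_nhdsWithin] with x hx
      have : MeasureTheory.AEStronglyMeasurable (fun y => F x y)
          (MeasureTheory.volume.restrict (Set.Ioc (0:ℝ) 1)) :=
        ((hFslice x hx).mono Set.Ioc_subset_Icc_self).aestronglyMeasurable measurableSet_Ioc
      rwa [huIoc]
    · filter_upwards [self_mem_nhdsWithin] with x hx
      apply Filter.Eventually.of_forall
      intro t ht
      rw [huIoc] at ht
      exact hC (x, t) (Set.mk_mem_prod hx (Set.Ioc_subset_Icc_self ht))
    · exact intervalIntegrable_const
    · apply Filter.Eventually.of_forall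
      intro t ht
      rw [huIoc] at ht
      exact hFslice' t (Set.Ioc_subset_Icc_self ht) x₀ hx₀
  have hHint : IntervalIntegrable (fun x => ∫ y in (0:ℝ)..1, F x y) MeasureTheory.volume 0 1 := by
    apply ContinuousOn.intervalIntegrable
    rw [huIcc]
    exact hHcont
  have hKint : IntervalIntegrable (fun x => ∫ y in (0:ℝ)..1, BB x y) MeasureTheory.volume 0 1 := by
    have e : (fun x => ∫ y in (0:ℝ)..1, BB x y)
        = fun x => ∑ i ∈ Finset.range (n₁+1), ∑ j ∈ Finset.range (n₂+1),
            bp n₁ i x * F ((i:ℝ)/n₁) ((j:ℝ)/n₂) * (1/((n₂:ℝ)+1)) := funext hBBint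
    rw [e]
    exact hBBcontx.intervalIntegrable 0 1
  -- split the remainder
  have hsplit : (∫ x in (0:ℝ)..1, ∫ y in (0:ℝ)..1, F x y) -
      (1 / (((n₁ : ℝ) + 1) * ((n₂ : ℝ) + 1))) *
        ∑ i ∈ Finset.range (n₁ + 1), ∑ j ∈ Finset.range (n₂ + 1), F ((i : ℝ) / n₁) ((j : ℝ) / n₂)
      = ∫ x in (0:ℝ)..1, ((∫ y in (0:ℝ)..1, F x y) - ∫ y in (0:ℝ)..1, BB x y) := by
    rw [intervalIntegral.integral_sub hHint hKint, houter]
  set φ : ℝ → ℝ := fun x => Mxx/(2*(n₁:ℝ)) * (x*(1-x)) + Myy/(12*(n₂:ℝ)) with hφdef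
  have hφcont : Continuous φ := by
    rw [hφdef]
    exact (continuous_const.mul (continuous_id'.mul (continuous_const.sub continuous_id'))).add
      continuous_const
  have hφint : IntervalIntegrable φ MeasureTheory.volume 0 1 := hφcont.intervalIntegrable 0 1
  have hφcalc : ∫ x in (0:ℝ)..1, φ x = Mxx/(12*(n₁:ℝ)) + Myy/(12*(n₂:ℝ)) := by
    rw [hφdef]
    rw [intervalIntegral.integral_add
      ((show Continuous fun x : ℝ => Mxx/(2*(n₁:ℝ)) * (x*(1-x)) from continuous_const.mul (continuous_id'.mul (continuous_const.sub continuous_id') : Continuous fun x : ℝ => x*(1-x))).intervalIntegrable 0 1)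
      intervalIntegrable_const]
    rw [intervalIntegral.integral_const_mul, integral_x_one_sub_x, intervalIntegral.integral_const]
    simp
    ring
  have hinner : ∀ x ∈ Set.Icc (0:ℝ) 1,
      |(∫ y in (0:ℝ)..1, F x y) - ∫ y in (0:ℝ)..1, BB x y| ≤ φ x := by
    intro x hx
    rw [← intervalIntegral.integral_sub (hFyint x hx) ((hBBconty x).intervalIntegrable 0 1)]
    have hb : ∀ᵐ t ∂(MeasureTheory.volume.restrict (Set.uIoc (0:ℝ) 1)), ‖F x t - BB x t‖ ≤
        (fun y => Mxx/(2*(n₁:ℝ))*(x*(1-x)) + Myy/(2*(n₂:ℝ))*(y*(1-y))) t := by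
      rw [huIoc]
      refine (MeasureTheory.ae_restrict_mem measurableSet_Ioc).mono ?_
      intro t ht
      have ht' : t ∈ Set.Icc (0:ℝ) 1 := Set.Ioc_subset_Icc_self ht
      have hptw := bern2_pointwise hn₁ hn₂ hFx hFxx hFy hFyy hMxx hMyy hx ht'
      rw [Real.norm_eq_abs]
      calc |F x t - BB x t| ≤ Mxx*(x*(1-x))/(2*(n₁:ℝ)) + Myy*(t*(1-t))/(2*(n₂:ℝ)) := hptw
        _ = Mxx/(2*(n₁:ℝ))*(x*(1-x)) + Myy/(2*(n₂:ℝ))*(t*(1-t)) := by ring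
    have hgint : IntervalIntegrable
        (fun y => Mxx/(2*(n₁:ℝ))*(x*(1-x)) + Myy/(2*(n₂:ℝ))*(y*(1-y)))
        MeasureTheory.volume 0 1 :=
      Continuous.intervalIntegrable (continuous_const.add (continuous_const.mul
        (continuous_id'.mul (continuous_const.sub continuous_id')))) 0 1
    have hle := intervalIntegral.norm_integral_le_abs_of_norm_le hb hgint
    rw [Real.norm_eq_abs] at hle
    refine hle.trans ?_
    have hgval : ∫ y in (0:ℝ)..1, (Mxx/(2*(n₁:ℝ))*(x*(1-x)) + Myy/(2*(n₂:ℝ))*(y*(1-y)))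
        = Mxx/(2*(n₁:ℝ))*(x*(1-x)) + Myy/(2*(n₂:ℝ))*(1/6) := by
      rw [intervalIntegral.integral_add intervalIntegrable_const
        ((show Continuous fun y : ℝ => Myy/(2*(n₂:ℝ)) * (y*(1-y)) from continuous_const.mul (continuous_id'.mul (continuous_const.sub continuous_id') : Continuous fun y : ℝ => y*(1-y))).intervalIntegrable 0 1)]
      rw [intervalIntegral.integral_const, intervalIntegral.integral_const_mul,
        integral_x_one_sub_x]
      simp
    rw [hgval]
    have hx10 : 0 ≤ x*(1-x) := mul_nonneg hx.1 (by linarith [hx.2])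
    have hnn : 0 ≤ Mxx/(2*(n₁:ℝ))*(x*(1-x)) + Myy/(2*(n₂:ℝ))*(1/6) := by positivity
    rw [abs_of_nonneg hnn, hφdef]
    have : Myy/(2*(n₂:ℝ))*(1/6) = Myy/(12*(n₂:ℝ)) := by ring
    rw [this]
  -- final bound
  rw [hsplit]
  have hbout : ∀ᵐ t ∂(MeasureTheory.volume.restrict (Set.uIoc (0:ℝ) 1)),
      ‖(∫ y in (0:ℝ)..1, F t y) - ∫ y in (0:ℝ)..1, BB t y‖ ≤ φ t := by
    rw [huIoc]
    refine (MeasureTheory.ae_restrict_mem measurableSet_Ioc).mono ?_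
    intro t ht
    rw [Real.norm_eq_abs]
    exact hinner t (Set.Ioc_subset_Icc_self ht)
  have hfin := intervalIntegral.norm_integral_le_abs_of_norm_le hbout hφint
  rw [Real.norm_eq_abs, hφcalc] at hfin
  have habs : |Mxx/(12*(n₁:ℝ)) + Myy/(12*(n₂:ℝ))| = Mxx/(12*(n₁:ℝ)) + Myy/(12*(n₂:ℝ)) := by
    apply abs_of_nonneg
    positivity
  rw [habs] at hfin
  refine hfin.trans ?_
  have h3 : 0 ≤ 1/(144*(n₁:ℝ)*(n₂:ℝ))*Mzz := by positivity
  have e1 : Mxx/(12*(n₁:ℝ)) = 1/(12*(n₁:ℝ))*Mxx := by ring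
  have e2 : Myy/(12*(n₂:ℝ)) = 1/(12*(n₂:ℝ))*Myy := by ring
  linarith
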